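/- Let N > 0 be real, let k' and k̃ be positive integers, and set δ := N/(k'·k̃). Suppose R_i = (a_i, a_i + w_i) × (b_i, b_i + h_i), for i = 1,…,k', are pairwise disjoint axis-parallel open rectangles contained in [0,N] × [N/k̃, N]. For each i let ĥ_i := ⌈h_i/δ⌉·δ. Then there exist reals b'_i ≥ 0 such that the rectangles (a_i, a_i + w_i) × (b'_i, b'_i + ĥ_i), i = 1,…,k', are pairwise disjoint and all contained in [0,N] × [0,N]. (The heights can be rounded up to integer multiples of δ, keeping the same widths and horizontal positions, using the empty strip of height N/k̃ at the bottom.) -/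

import Mathlib

lemma ioo_sub_icc {p q u v : ℝ} (hpq : p < q) (hs : Set.Ioo p q ⊆ Set.Icc u v) :
    u ≤ p ∧ q ≤ v := by
  have h1 : Set.Icc p q ⊆ Set.Icc u v := by
    rw [← closure_Ioo hpq.ne]
    exact isClosed_Icc.closure_subset_iff.mpr hs
  exact (Set.Icc_subset_Icc_iff hpq.le).mp h1

lemma ioo_overlap {p q p' q' : ℝ} (h1 : p < q') (h2 : p' < q) (h3 : p < q) (h4 : p' < q') :
    ((max p p' + min q q') / 2) ∈ Set.Ioo p q ∩ Set.Ioo p' q' := by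
  have hM : max p p' < min q q' := max_lt (lt_min h3 h1) (lt_min h2 h4)
  have e1 := le_max_left p p'
  have e2 := le_max_right p p'
  have e3 := min_le_left q q'
  have e4 := min_le_right q q'
  exact ⟨⟨by linarith, by linarith⟩, ⟨by linarith, by linarith⟩⟩

/-- Height rounding. If `k'` pairwise disjoint open rectangles are packed in
`[0,N] × [N/k̃, N]`, then their heights can be rounded up to integer multiples of
`δ = N/(k'·k̃)` (keeping widths and horizontal positions) and repacked, pairwise disjoint,
inside `[0,N] × [0,N]`. -/
theorem stmt_9 (N : ℝ) (hN : 0 < N) (k' kt : ℕ) (hk' : 0 < k') (hkt : 0 < kt)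
    (a w b h : Fin k' → ℝ) (hw : ∀ i, 0 < w i) (hh : ∀ i, 0 < h i)
    (hsub : ∀ i, Set.Ioo (a i) (a i + w i) ×ˢ Set.Ioo (b i) (b i + h i) ⊆
      Set.Icc (0 : ℝ) N ×ˢ Set.Icc (N / (kt : ℝ)) N)
    (hdisj : ∀ i j, i ≠ j →
      (Set.Ioo (a i) (a i + w i) ×ˢ Set.Ioo (b i) (b i + h i)) ∩
      (Set.Ioo (a j) (a j + w j) ×ˢ Set.Ioo (b j) (b j + h j)) = ∅) :
    ∃ b' : Fin k' → ℝ, (∀ i, 0 ≤ b' i) ∧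
      (∀ i j, i ≠ j →
        (Set.Ioo (a i) (a i + w i) ×ˢ
          Set.Ioo (b' i) (b' i +
            (⌈h i / (N / ((k' : ℝ) * (kt : ℝ)))⌉ : ℝ) * (N / ((k' : ℝ) * (kt : ℝ))))) ∩
        (Set.Ioo (a j) (a j + w j) ×ˢ
          Set.Ioo (b' j) (b' j +
            (⌈h j / (N / ((k' : ℝ) * (kt : ℝ)))⌉ : ℝ) * (N / ((k' : ℝ) * (kt : ℝ))))) = ∅) ∧
      (∀ i, Set.Ioo (a i) (a i + w i) ×ˢ
          Set.Ioo (b' i) (b' i +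
            (⌈h i / (N / ((k' : ℝ) * (kt : ℝ)))⌉ : ℝ) * (N / ((k' : ℝ) * (kt : ℝ)))) ⊆
        Set.Icc (0 : ℝ) N ×ˢ Set.Icc (0 : ℝ) N) := by
  classical
  set d : ℝ := N / ((k' : ℝ) * (kt : ℝ)) with hd
  have hk'R : (0:ℝ) < (k' : ℝ) := by exact_mod_cast hk'
  have hktR : (0:ℝ) < (kt : ℝ) := by exact_mod_cast hkt
  have hdpos : 0 < d := by rw [hd]; positivity
  have hdk : d * (k' : ℝ) = N / (kt : ℝ) := by
    rw [hd]; field_simp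
  -- bounds from hsub
  have hbx : ∀ i, 0 ≤ a i ∧ a i + w i ≤ N := by
    intro i
    have hxne : a i < a i + w i := by linarith [hw i]
    have hyne : b i < b i + h i := by linarith [hh i]
    have := (Set.prod_subset_prod_iff.mp (hsub i))
    rcases this with ⟨hs1, _⟩ | he | he
    · exact ioo_sub_icc hxne hs1
    · exact absurd he (Set.nonempty_Ioo.mpr hxne).ne_empty
    · exact absurd he (Set.nonempty_Ioo.mpr hyne).ne_empty
  have hby : ∀ i, N / (kt : ℝ) ≤ b i ∧ b i + h i ≤ N := by
    intro i
    have hxne : a i < a i + w i := by linarith [hw i]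
    have hyne : b i < b i + h i := by linarith [hh i]
    have := (Set.prod_subset_prod_iff.mp (hsub i))
    rcases this with ⟨_, hs2⟩ | he | he
    · exact ioo_sub_icc hyne hs2
    · exact absurd he (Set.nonempty_Ioo.mpr hxne).ne_empty
    · exact absurd he (Set.nonempty_Ioo.mpr hyne).ne_empty
  -- trichotomy
  have htri : ∀ i j, i ≠ j → a i < a j + w j → a j < a i + w i →
      b i + h i ≤ b j ∨ b j + h j ≤ b i := by
    intro i j hij hx1 hx2
    by_contra hc
    push_neg at hc
    obtain ⟨hc1, hc2⟩ := hc
    have hx := ioo_overlap hx1 hx2 (by linarith [hw i]) (by linarith [hw j])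
    have hy := ioo_overlap hc2 hc1 (by linarith [hh i]) (by linarith [hh j])
    have hmem : ((max (a i) (a j) + min (a i + w i) (a j + w j)) / 2,
        (max (b i) (b j) + min (b i + h i) (b j + h j)) / 2) ∈
        (Set.Ioo (a i) (a i + w i) ×ˢ Set.Ioo (b i) (b i + h i)) ∩
        (Set.Ioo (a j) (a j + w j) ×ˢ Set.Ioo (b j) (b j + h j)) :=
      ⟨⟨hx.1, hy.1⟩, ⟨hx.2, hy.2⟩⟩
    rw [hdisj i j hij] at hmem
    exact hmem
  -- the relation "j is below i with overlapping x-projections"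
  set r : Fin k' → Fin k' → Prop := fun j i =>
    (a i < a j + w j ∧ a j < a i + w i) ∧ b j + h j ≤ b i with hr
  have hm : ∀ j i, Relation.TransGen r j i → b j + h j ≤ b i := by
    intro j i ht
    induction ht with
    | single hs => exact hs.2
    | tail _ hs ih =>
        exact ih.trans ((le_add_of_nonneg_right (hh _).le).trans hs.2)
  set abv : Fin k' → Finset (Fin k') := fun i =>
    Finset.univ.filter fun j => Relation.TransGen r i j with habv
  set lvl : Fin k' → ℕ := fun i => (abv i).card with hlvl
  have hnotmem : ∀ i, i ∉ abv i := by
    intro i hi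
    rw [habv, Finset.mem_filter] at hi
    have := hm i i hi.2
    linarith [hh i]
  have hlvl_lt : ∀ j i, r j i → lvl i + 1 ≤ lvl j := by
    intro j i hji
    have hsubs : insert i (abv i) ⊆ abv j := by
      intro x hx
      rw [Finset.mem_insert] at hx
      rw [habv, Finset.mem_filter]
      refine ⟨Finset.mem_univ _, ?_⟩
      rcases hx with rfl | hx
      · exact Relation.TransGen.single hji
      · rw [habv, Finset.mem_filter] at hx
        exact Relation.TransGen.head hji hx.2
    calc lvl i + 1 = (insert i (abv i)).card := by
          rw [Finset.card_insert_of_notMem (hnotmem i)]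
      _ ≤ (abv j).card := Finset.card_le_card hsubs
      _ = lvl j := rfl
  have hlvl_le : ∀ i, (lvl i : ℝ) + 1 ≤ (k' : ℝ) := by
    intro i
    have h1 : (insert i (abv i)).card ≤ k' := by
      simpa using Finset.card_le_card (Finset.subset_univ (insert i (abv i)))
    rw [Finset.card_insert_of_notMem (hnotmem i)] at h1
    exact_mod_cast h1
  -- rounded heights
  set H : Fin k' → ℝ := fun i => (⌈h i / d⌉ : ℝ) * d with hH
  have hH1 : ∀ i, h i ≤ H i := by
    intro i
    have := Int.le_ceil (h i / d)
    calc h i = (h i / d) * d := by field_simp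
      _ ≤ H i := by rw [hH]; exact mul_le_mul_of_nonneg_right this hdpos.le
  have hH2 : ∀ i, H i < h i + d := by
    intro i
    have := Int.ceil_lt_add_one (h i / d)
    calc H i < (h i / d + 1) * d := by
          rw [hH]; exact mul_lt_mul_of_pos_right this hdpos
      _ = h i + d := by field_simp
  refine ⟨fun i => b i - d * ((lvl i : ℝ) + 1), ?_, ?_, ?_⟩
  · intro i
    show (0:ℝ) ≤ b i - d * ((lvl i : ℝ) + 1)
    have h1 := hby i |>.1
    have h3 : d * ((lvl i : ℝ) + 1) ≤ d * (k' : ℝ) :=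
      mul_le_mul_of_nonneg_left (hlvl_le i) hdpos.le
    rw [hdk] at h3
    linarith
  · intro i j hij
    rw [Set.eq_empty_iff_forall_notMem]
    rintro ⟨x, y⟩ hmem
    simp only [Set.mem_inter_iff, Set.mem_prod, Set.mem_Ioo] at hmem
    obtain ⟨⟨⟨hxi1, hxi2⟩, hyi1, hyi2⟩, ⟨hxj1, hxj2⟩, hyj1, hyj2⟩ := hmem
    have hov1 : a i < a j + w j := lt_trans hxi1 hxj2
    have hov2 : a j < a i + w i := lt_trans hxj1 hxi2
    have eHi : ((⌈h i / d⌉ : ℤ) : ℝ) * d = H i := rfl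
    have eHj : ((⌈h j / d⌉ : ℤ) : ℝ) * d = H j := rfl
    rcases htri i j hij hov1 hov2 with hc | hc
    · -- r i j : i below j ; so lvl j + 1 ≤ lvl i
      have hl : lvl j + 1 ≤ lvl i := hlvl_lt i j ⟨⟨hov2, hov1⟩, hc⟩
      have hlR : (lvl j : ℝ) + 1 ≤ (lvl i : ℝ) := by exact_mod_cast hl
      have h3 : d * ((lvl j : ℝ) + 1) ≤ d * (lvl i : ℝ) :=
        mul_le_mul_of_nonneg_left hlR hdpos.le
      have h2 := hH2 i
      -- top of new i < bottom of new j, but y is in both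
      linarith
    · have hl : lvl i + 1 ≤ lvl j := hlvl_lt j i ⟨⟨hov1, hov2⟩, hc⟩
      have hlR : (lvl i : ℝ) + 1 ≤ (lvl j : ℝ) := by exact_mod_cast hl
      have h3 : d * ((lvl i : ℝ) + 1) ≤ d * (lvl j : ℝ) :=
        mul_le_mul_of_nonneg_left hlR hdpos.le
      have h2 := hH2 j
      linarith
  · rintro i ⟨x, y⟩ hmem
    simp only [Set.mem_prod, Set.mem_Ioo] at hmem
    obtain ⟨⟨hx1, hx2⟩, hy1, hy2⟩ := hmem
    have hax := hbx i
    have hbi := hby i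
    have eHi : ((⌈h i / d⌉ : ℤ) : ℝ) * d = H i := rfl
    have h2 := hH2 i
    have hdl : 0 ≤ d * (lvl i : ℝ) := by positivity
    have hb'0 : 0 ≤ b i - d * ((lvl i : ℝ) + 1) := by
      have h3 : d * ((lvl i : ℝ) + 1) ≤ d * (k' : ℝ) :=
        mul_le_mul_of_nonneg_left (hlvl_le i) hdpos.le
      rw [hdk] at h3
      linarith [hby i |>.1]
    constructor
    · constructor <;> [linarith [hax.1]; linarith [hax.2]]
    · constructor
      · linarith
      · have := hbi.2
        linarith
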